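/- Let (l_n) and (m_n) be sequences of positive integers with l_n → ∞ and m_n → ∞, and set U_n = l_n · m_n. Then m_n² · C(U_n − 2m_n, l_n − 2) / C(U_n, l_n) → e^{−2} as n → ∞, where C(n, r) denotes the binomial coefficient. Equivalently, if Y_n is a uniformly random l_n-element subset of a set of size U_n partitioned into l_n buckets of size m_n, the probability that two fixed distinct buckets each contain exactly one element of Y_n tends to e^{−2}. -/

import Mathlib

open Filter

open Finset in
lemma cast_descFactorial_prod (n k : ℕ) (h : k ≤ n) :
    (n.descFactorial k : ℝ) = ∏ i ∈ Finset.range k, ((n : ℝ) - i) := by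
  rw [Nat.descFactorial_eq_prod_range, Nat.cast_prod]
  refine Finset.prod_congr rfl fun i hi => ?_
  rw [Nat.cast_sub ((Finset.mem_range.mp hi).le.trans h)]

set_option maxHeartbeats 1600000 in
lemma F_bounds (l m : ℕ) (hl : 4 ≤ l) (hm : 4 ≤ m) :
    (1 - 1/((l:ℝ)-1)) * (1 - 2/(l:ℝ))^(l-2) ≤
      ((m:ℝ)^2 * (Nat.choose (l*m - 2*m) (l-2) : ℝ)) / (Nat.choose (l*m) l : ℝ) ∧
    ((m:ℝ)^2 * (Nat.choose (l*m - 2*m) (l-2) : ℝ)) / (Nat.choose (l*m) l : ℝ) ≤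
      Real.exp (-2 + 4/(m:ℝ) + 8/(l:ℝ)) := by
  have hlr : (4:ℝ) ≤ l := by exact_mod_cast hl
  have hmr : (4:ℝ) ≤ m := by exact_mod_cast hm
  set k := l - 2 with hk
  set A := l*m - 2*m with hAdef
  set B := l*m - 2 with hBdef
  clear_value k A B
  have h2l : 2 ≤ l := by omega
  have h2m : 2*m ≤ l*m := Nat.mul_le_mul_right m h2l
  have hlU : l ≤ l*m := Nat.le_mul_of_pos_right l (by omega)
  have hkA : k ≤ A := by
    have : (l-2)*1 ≤ (l-2)*m := Nat.mul_le_mul_left _ (by omega)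
    simp only [hAdef, hk, ← Nat.sub_mul]; omega
  have hkB : k ≤ B := by omega
  have hkr : (k:ℝ) = (l:ℝ) - 2 := by
    rw [hk, Nat.cast_sub h2l]; norm_num
  have hAr : (A:ℝ) = (l:ℝ)*m - 2*m := by
    rw [hAdef, Nat.cast_sub h2m]; push_cast; ring
  have hBr : (B:ℝ) = (l:ℝ)*m - 2 := by
    rw [hBdef, Nat.cast_sub (by omega)]; push_cast; ring
  -- identity
  have hid : (l*m).choose l * l.choose 2 = (l*m).choose 2 * B.choose k := by
    rw [hBdef, hk]; exact Nat.choose_mul h2l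
  have cl2 : (0:ℝ) < l.choose 2 := by exact_mod_cast Nat.choose_pos h2l
  have cU2 : (0:ℝ) < (l*m).choose 2 := by exact_mod_cast Nat.choose_pos (by omega)
  have cUl : (0:ℝ) < (l*m).choose l := by exact_mod_cast Nat.choose_pos hlU
  have cBk : (0:ℝ) < B.choose k := by exact_mod_cast Nat.choose_pos hkB
  have hidr : ((l*m).choose l : ℝ) * (l.choose 2 : ℝ) = ((l*m).choose 2 : ℝ) * (B.choose k : ℝ) := by
    exact_mod_cast hid
  -- split F
  have hF : ((m:ℝ)^2 * (A.choose k : ℝ)) / ((l*m).choose l : ℝ)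
      = ((m:ℝ)^2 * (l.choose 2 : ℝ) / ((l*m).choose 2 : ℝ)) * ((A.choose k : ℝ) / (B.choose k : ℝ)) := by
    rw [div_mul_div_comm, div_eq_div_iff cUl.ne' (by positivity)]
    linear_combination (-((m:ℝ)^2 * (A.choose k : ℝ))) * hidr
  -- product form of Q
  have hfact : (0:ℝ) < (Nat.factorial k : ℝ) := by exact_mod_cast Nat.factorial_pos k
  have hQprod : (A.choose k : ℝ) / (B.choose k : ℝ)
      = ∏ i ∈ Finset.range k, (((A:ℝ) - i) / ((B:ℝ) - i)) := by
    have e1 : ((Nat.factorial k) : ℝ) * (A.choose k : ℝ) = ∏ i ∈ Finset.range k, ((A:ℝ) - i) := by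
      rw [← cast_descFactorial_prod A k hkA]
      exact_mod_cast (Nat.descFactorial_eq_factorial_mul_choose A k).symm
    have e2 : ((Nat.factorial k) : ℝ) * (B.choose k : ℝ) = ∏ i ∈ Finset.range k, ((B:ℝ) - i) := by
      rw [← cast_descFactorial_prod B k hkB]
      exact_mod_cast (Nat.descFactorial_eq_factorial_mul_choose B k).symm
    rw [Finset.prod_div_distrib, ← e1, ← e2, mul_div_mul_left _ _ hfact.ne']
  have hBpos : ∀ i ∈ Finset.range k, (0:ℝ) < (B:ℝ) - i := by
    intro i hi
    have h1 : i < B := lt_of_lt_of_le (Finset.mem_range.mp hi) hkB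
    have : (i:ℝ) < (B:ℝ) := by exact_mod_cast h1
    linarith
  have hApos : ∀ i ∈ Finset.range k, (0:ℝ) < (A:ℝ) - i := by
    intro i hi
    have h1 : i < A := lt_of_lt_of_le (Finset.mem_range.mp hi) hkA
    have : (i:ℝ) < (A:ℝ) := by exact_mod_cast h1
    linarith
  -- termwise bounds
  have hterm_low : ∀ i ∈ Finset.range k, (1 - 2/(l:ℝ)) ≤ ((A:ℝ) - i) / ((B:ℝ) - i) := by
    intro i hi
    have hir : (i:ℝ) ≤ (k:ℝ) - 1 := by
      have h1 : i + 1 ≤ k := Finset.mem_range.mp hi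
      have : (i:ℝ) + 1 ≤ (k:ℝ) := by exact_mod_cast h1
      linarith
    have hB' := hBpos i hi
    have hlpos : (0:ℝ) < l := by linarith
    have e : (1:ℝ) - 2/(l:ℝ) = ((l:ℝ) - 2)/(l:ℝ) := by field_simp
    have hir2 : (i:ℝ) ≤ (l:ℝ) - 3 := by rw [hkr] at hir; linarith
    rw [e, div_le_div_iff₀ hlpos hB', hAr, hBr]
    nlinarith
  have hterm_high : ∀ i ∈ Finset.range k, ((A:ℝ) - i) / ((B:ℝ) - i) ≤ (A:ℝ)/(B:ℝ) := by
    intro i hi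
    have hB' := hBpos i hi
    have hBpos0 : (0:ℝ) < (B:ℝ) := by rw [hBr]; nlinarith
    have hipos : (0:ℝ) ≤ (i:ℝ) := Nat.cast_nonneg i
    have hAB : (A:ℝ) ≤ (B:ℝ) := by rw [hAr, hBr]; nlinarith
    have hA0 : (0:ℝ) ≤ (A:ℝ) := by rw [hAr]; nlinarith
    rw [div_le_div_iff₀ hB' hBpos0]
    nlinarith
  -- Q bounds
  have hconst : ∀ c : ℝ, c^k = ∏ _i ∈ Finset.range k, c := by
    intro c; rw [Finset.prod_const, Finset.card_range]
  have hQlow : (1 - 2/(l:ℝ))^k ≤ (A.choose k : ℝ) / (B.choose k : ℝ) := by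
    rw [hQprod, hconst]
    refine Finset.prod_le_prod (fun i _ => ?_) hterm_low
    have : (2:ℝ)/l ≤ 2/4 := by
      apply div_le_div_of_nonneg_left (by norm_num) (by norm_num) hlr
    linarith
  have hQhigh : (A.choose k : ℝ) / (B.choose k : ℝ) ≤ ((A:ℝ)/(B:ℝ))^k := by
    rw [hQprod, hconst]
    refine Finset.prod_le_prod (fun i hi => le_of_lt (div_pos (hApos i hi) (hBpos i hi))) hterm_high
  have hlfrac : (0:ℝ) ≤ 1 - 2/(l:ℝ) := by
    have : (2:ℝ)/l ≤ 2/4 := div_le_div_of_nonneg_left (by norm_num) (by norm_num) hlr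
    linarith
  -- upper bound on (A/B)^k
  have hBpos0 : (0:ℝ) < (B:ℝ) := by rw [hBr]; nlinarith
  have hA0 : (0:ℝ) ≤ (A:ℝ) := by rw [hAr]; nlinarith
  have hABexp : (A:ℝ)/(B:ℝ) ≤ Real.exp (-(((B:ℝ)-(A:ℝ))/(B:ℝ))) := by
    have h1 : (A:ℝ)/(B:ℝ) = (-(((B:ℝ)-(A:ℝ))/(B:ℝ))) + 1 := by field_simp; ring
    rw [h1]
    exact Real.add_one_le_exp _
  have hpowexp : ((A:ℝ)/(B:ℝ))^k ≤ Real.exp ((k:ℝ) * (-(((B:ℝ)-(A:ℝ))/(B:ℝ)))) := by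
    calc ((A:ℝ)/(B:ℝ))^k ≤ (Real.exp (-(((B:ℝ)-(A:ℝ))/(B:ℝ))))^k :=
          pow_le_pow_left₀ (div_nonneg hA0 hBpos0.le) hABexp k
      _ = Real.exp ((k:ℝ) * (-(((B:ℝ)-(A:ℝ))/(B:ℝ)))) := by
          rw [← Real.exp_nat_mul]
  have hexparg : (k:ℝ) * (-(((B:ℝ)-(A:ℝ))/(B:ℝ))) ≤ -2 + 4/(m:ℝ) + 8/(l:ℝ) := by
    have hlm : (0:ℝ) < (l:ℝ)*(m:ℝ) := by nlinarith
    have e2 : (-2:ℝ) + 4/(m:ℝ) + 8/(l:ℝ) = ((-2)*((l:ℝ)*m) + 4*l + 8*m)/((l:ℝ)*m) := by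
      field_simp
    have e1 : (k:ℝ) * (-(((B:ℝ)-(A:ℝ))/(B:ℝ))) = (-(((l:ℝ)-2)*(2*m-2)))/((l:ℝ)*m-2) := by
      rw [hkr, hAr, hBr]; field_simp; ring
    rw [e1, e2, div_le_div_iff₀ (by nlinarith) hlm]
    nlinarith
  have hQexp : (A.choose k : ℝ) / (B.choose k : ℝ) ≤ Real.exp (-2 + 4/(m:ℝ) + 8/(l:ℝ)) :=
    hQhigh.trans (hpowexp.trans (Real.exp_le_exp.mpr hexparg))
  -- R bounds
  have hlm1 : (0:ℝ) < (l:ℝ)*m - 1 := by nlinarith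
  have hR : (m:ℝ)^2 * (l.choose 2 : ℝ) / ((l*m).choose 2 : ℝ) = ((m:ℝ) * ((l:ℝ)-1))/((l:ℝ)*m - 1) := by
    rw [Nat.cast_choose_two, Nat.cast_choose_two]
    push_cast
    rw [div_eq_div_iff (by positivity) hlm1.ne']
    ring
  have hRhigh : (m:ℝ)^2 * (l.choose 2 : ℝ) / ((l*m).choose 2 : ℝ) ≤ 1 := by
    rw [hR, div_le_one hlm1]; nlinarith
  have hRlow : 1 - 1/((l:ℝ)-1) ≤ (m:ℝ)^2 * (l.choose 2 : ℝ) / ((l*m).choose 2 : ℝ) := by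
    rw [hR]
    have hl1 : (0:ℝ) < (l:ℝ) - 1 := by linarith
    have e : (1:ℝ) - 1/((l:ℝ)-1) = ((l:ℝ)-2)/((l:ℝ)-1) := by field_simp; ring
    rw [e, div_le_div_iff₀ hl1 hlm1]
    nlinarith
  have hRpos : (0:ℝ) ≤ (m:ℝ)^2 * (l.choose 2 : ℝ) / ((l*m).choose 2 : ℝ) := by positivity
  have hQpos : (0:ℝ) ≤ (A.choose k : ℝ) / (B.choose k : ℝ) := by positivity
  constructor
  · rw [hF]
    have h1 : (0:ℝ) ≤ 1 - 1/((l:ℝ)-1) := by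
      have : (1:ℝ)/((l:ℝ)-1) ≤ 1/3 := by
        apply div_le_div_of_nonneg_left (by norm_num) (by norm_num) (by linarith)
      linarith
    exact mul_le_mul hRlow hQlow (pow_nonneg hlfrac k) hRpos
  · rw [hF]
    calc ((m:ℝ)^2 * (l.choose 2 : ℝ) / ((l*m).choose 2 : ℝ)) * ((A.choose k : ℝ) / (B.choose k : ℝ))
        ≤ 1 * Real.exp (-2 + 4/(m:ℝ) + 8/(l:ℝ)) := mul_le_mul hRhigh hQexp hQpos (by norm_num)
      _ = _ := one_mul _

lemma aux_pow_lim : Tendsto (fun n : ℕ => (1 - 2/(n:ℝ))^(n-2)) atTop (nhds (Real.exp (-2))) := by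
  have h1 : Tendsto (fun n : ℕ => (1 + (-2)/(n:ℝ))^n) atTop (nhds (Real.exp (-2))) :=
    Real.tendsto_one_add_div_pow_exp (-2)
  have hcast : Tendsto (fun n : ℕ => (n:ℝ)) atTop atTop := tendsto_natCast_atTop_atTop
  have hinv : Tendsto (fun n : ℕ => ((n:ℝ))⁻¹) atTop (nhds 0) := hcast.inv_tendsto_atTop
  have h0 : Tendsto (fun n : ℕ => 1 + (-2)/(n:ℝ)) atTop (nhds 1) := by
    have h' : Tendsto (fun n : ℕ => (-2) * ((n:ℝ))⁻¹) atTop (nhds ((-2) * 0)) := hinv.const_mul _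
    simp only [div_eq_mul_inv]
    simpa using tendsto_const_nhds.add h' 
  have h2 : Tendsto (fun n : ℕ => (1 + (-2)/(n:ℝ))^2) atTop (nhds 1) := by
    simpa using h0.pow 2
  have h3 : Tendsto (fun n : ℕ => (1 + (-2)/(n:ℝ))^n / (1 + (-2)/(n:ℝ))^2) atTop
      (nhds (Real.exp (-2))) := by
    have h3' := h1.div h2 one_ne_zero
    rw [div_one] at h3'
    exact h3'
  refine h3.congr' ?_
  filter_upwards [eventually_ge_atTop 3] with n hn
  have hne : (1 : ℝ) + (-2)/(n:ℝ) ≠ 0 := by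
    have hn3 : (3:ℝ) ≤ n := by exact_mod_cast hn
    have : (2:ℝ)/(n:ℝ) ≤ 2/3 := by
      apply div_le_div_of_nonneg_left (by norm_num) (by norm_num) hn3
    have : (0:ℝ) < 1 + (-2)/(n:ℝ) := by
      rw [neg_div]; linarith
    exact this.ne'
  rw [show (1:ℝ) - 2/(n:ℝ) = 1 + (-2)/(n:ℝ) by ring,
    pow_sub₀ _ hne (by omega : 2 ≤ n), div_eq_mul_inv]

theorem stmt_13 (l m : ℕ → ℕ) (hlpos : ∀ n, 0 < l n) (hmpos : ∀ n, 0 < m n)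
    (hl : Tendsto l atTop atTop) (hm : Tendsto m atTop atTop) :
    Tendsto (fun n =>
        ((m n : ℝ) ^ 2 * (Nat.choose (l n * m n - 2 * m n) (l n - 2) : ℝ))
          / (Nat.choose (l n * m n) (l n) : ℝ))
      atTop (nhds (Real.exp (-2))) := by
  have h4l := hl.eventually_ge_atTop 4
  have h4m := hm.eventually_ge_atTop 4
  have hcastl : Tendsto (fun n => ((l n : ℝ))) atTop atTop :=
    tendsto_natCast_atTop_atTop.comp hl
  have hcastm : Tendsto (fun n => ((m n : ℝ))) atTop atTop :=
    tendsto_natCast_atTop_atTop.comp hm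
  have hinvl : Tendsto (fun n => ((l n : ℝ))⁻¹) atTop (nhds 0) := hcastl.inv_tendsto_atTop
  have hinvm : Tendsto (fun n => ((m n : ℝ))⁻¹) atTop (nhds 0) := hcastm.inv_tendsto_atTop
  have hlow : Tendsto (fun n => (1 - 1/((l n:ℝ)-1)) * (1 - 2/(l n:ℝ))^(l n - 2))
      atTop (nhds (Real.exp (-2))) := by
    have h1 : Tendsto (fun n => ((l n:ℝ) - 1)) atTop atTop := by
      simpa [sub_eq_add_neg] using tendsto_atTop_add_const_right atTop (-1 : ℝ) hcastl
    have h3 : Tendsto (fun n => 1/((l n:ℝ)-1)) atTop (nhds 0) := by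
      simp only [one_div]
      exact h1.inv_tendsto_atTop
    have h2 : Tendsto (fun n => 1 - 1/((l n:ℝ)-1)) atTop (nhds 1) := by
      simpa using tendsto_const_nhds.sub h3
    have h4 : Tendsto (fun n => (1 - 2/(l n:ℝ))^(l n - 2)) atTop (nhds (Real.exp (-2))) :=
      aux_pow_lim.comp hl
    simpa using h2.mul h4
  have hhigh : Tendsto (fun n => Real.exp (-2 + 4/(m n:ℝ) + 8/(l n:ℝ))) atTop
      (nhds (Real.exp (-2))) := by
    have h5 : Tendsto (fun n => (-2:ℝ) + 4/(m n:ℝ) + 8/(l n:ℝ)) atTop (nhds (-2)) := by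
      have h6 : Tendsto (fun n => (4:ℝ)/(m n:ℝ)) atTop (nhds 0) := by
        simpa [div_eq_mul_inv] using hinvm.const_mul (4:ℝ)
      have h7 : Tendsto (fun n => (8:ℝ)/(l n:ℝ)) atTop (nhds 0) := by
        simpa [div_eq_mul_inv] using hinvl.const_mul (8:ℝ)
      simpa using (tendsto_const_nhds.add h6).add h7
    exact (Real.continuous_exp.tendsto _).comp h5
  refine tendsto_of_tendsto_of_tendsto_of_le_of_le' hlow hhigh ?_ ?_
  · filter_upwards [h4l, h4m] with n h1 h2
    exact (F_bounds (l n) (m n) h1 h2).1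
  · filter_upwards [h4l, h4m] with n h1 h2
    exact (F_bounds (l n) (m n) h1 h2).2
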